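/- arXiv:2505.10480 — 4 statements merged into one kernel-verified Lean document; each statement's English description precedes it below -/
import Mathlib

section
/- Let A ∈ ASM(n) and let v ∈ S_{n+1} be a permutation with v ≥ 1 ⊕ A in Bruhat order (extended via rank functions to ASMs) such that v is less than or equal to 1 ⊕ w for some w ∈ S_n. If the first row and first column of v agree with those of 1 ⊕ A (both equal to the first unit vector), then v = 1 ⊕ v' for some v' ∈ S_n with w ≥ v' ≥ A. -/
/-- An alternating sign matrix: entries in `{-1,0,1}`, each row and column sums
to `1`, and consecutive nonzero entries along any row or column have opposite
signs (i.e. nonzero entries alternate between `1` and `-1`). -/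
def IsASM {n : ℕ} (A : Matrix (Fin n) (Fin n) ℤ) : Prop :=
  (∀ i j, A i j = -1 ∨ A i j = 0 ∨ A i j = 1) ∧
  (∀ i, ∑ j, A i j = 1) ∧
  (∀ j, ∑ i, A i j = 1) ∧
  (∀ i : Fin n, ∀ j₁ j₂ : Fin n, j₁ < j₂ → A i j₁ ≠ 0 → A i j₂ ≠ 0 →
    (∀ j, j₁ < j → j < j₂ → A i j = 0) → A i j₂ = -A i j₁) ∧
  (∀ j : Fin n, ∀ i₁ i₂ : Fin n, i₁ < i₂ → A i₁ j ≠ 0 → A i₂ j ≠ 0 →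
    (∀ i, i₁ < i → i < i₂ → A i j = 0) → A i₂ j = -A i₁ j)

/-- The rank function `rk_A(i,j) = ∑_{a ≤ i} ∑_{b ≤ j} A_{a,b}` (1-based indices,
so `rk A i j` sums the entries in the first `i` rows and first `j` columns). -/
def rk {n : ℕ} (A : Matrix (Fin n) (Fin n) ℤ) (i j : ℕ) : ℤ :=
  ∑ a : Fin n, ∑ b : Fin n, if (a : ℕ) < i ∧ (b : ℕ) < j then A a b else 0

/-- The matrix `1 ⊕ A`. -/
def oneOplus {n : ℕ} (A : Matrix (Fin n) (Fin n) ℤ) :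
    Matrix (Fin (n + 1)) (Fin (n + 1)) ℤ :=
  Matrix.of fun i j =>
    if hi : (i : ℕ) = 0 then (if (j : ℕ) = 0 then 1 else 0)
    else if hj : (j : ℕ) = 0 then 0
    else A ⟨(i : ℕ) - 1, by have := i.isLt; omega⟩ ⟨(j : ℕ) - 1, by have := j.isLt; omega⟩

/-- The Bruhat order on ASMs: `B ≥ C` iff `rk_B(i,j) ≤ rk_C(i,j)` for all `i,j`. -/
def BruhatGE {n : ℕ} (B C : Matrix (Fin n) (Fin n) ℤ) : Prop :=
  ∀ i j : ℕ, i ≤ n → j ≤ n → rk B i j ≤ rk C i j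

/-- A permutation matrix: a `0`-`1` matrix with exactly one `1` in each row and column. -/
def IsPermMatrix {n : ℕ} (w : Matrix (Fin n) (Fin n) ℤ) : Prop :=
  (∀ i j, w i j = 0 ∨ w i j = 1) ∧ (∀ i, ∃! j, w i j = 1) ∧ (∀ j, ∃! i, w i j = 1)

lemma oneOplus_succ_succ {n : ℕ} (M : Matrix (Fin n) (Fin n) ℤ) (a b : Fin n) :
    oneOplus M a.succ b.succ = M a b := by
  simp [oneOplus, Matrix.of_apply, Fin.val_succ]

lemma rk_oneOplus_succ {n : ℕ} (M : Matrix (Fin n) (Fin n) ℤ) (i j : ℕ) :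
    rk (oneOplus M) (i+1) (j+1) = 1 + rk M i j := by
  unfold rk
  rw [Fin.sum_univ_succ]
  have h0 : (∑ b : Fin (n+1), if ((0:Fin (n+1)) : ℕ) < i+1 ∧ (b:ℕ) < j+1
      then oneOplus M 0 b else 0) = 1 := by
    rw [Fin.sum_univ_succ]
    simp only [Fin.val_zero, Nat.zero_lt_succ, true_and, if_true]
    have : (∑ b : Fin n, if ((b.succ : ℕ)) < j+1 then oneOplus M 0 b.succ else 0) = 0 := by
      apply Finset.sum_eq_zero
      intro b _
      have : oneOplus M 0 b.succ = 0 := by simp [oneOplus]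
      simp [this]
    rw [this]
    simp [oneOplus]
  rw [h0]
  congr 1
  apply Finset.sum_congr rfl
  intro a _
  rw [Fin.sum_univ_succ]
  have hz : oneOplus M a.succ 0 = 0 := by simp [oneOplus]
  rw [hz]
  rw [ite_self, zero_add]
  apply Finset.sum_congr rfl
  intro b _
  rw [oneOplus_succ_succ]
  simp only [Fin.val_succ]
  congr 1
  simp [Nat.succ_lt_succ_iff]

/-- If `v ∈ S_{n+1}` satisfies `1 ⊕ w ≥ v ≥ 1 ⊕ A` and the first row and first
column of `v` agree with those of `1 ⊕ A` (both equal to the first unit vector),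
then `v = 1 ⊕ v'` for some `v' ∈ S_n` with `w ≥ v' ≥ A`. -/
theorem perm_above_oneOplus_splits {n : ℕ} (A w : Matrix (Fin n) (Fin n) ℤ)
    (v : Matrix (Fin (n + 1)) (Fin (n + 1)) ℤ)
    (hA : IsASM A) (hw : IsPermMatrix w) (hv : IsPermMatrix v)
    (hvA : BruhatGE v (oneOplus A)) (hwv : BruhatGE (oneOplus w) v)
    (hrow : v 0 0 = 1 ∧ (∀ j : Fin (n + 1), j ≠ 0 → v 0 j = 0) ∧
      (∀ i : Fin (n + 1), i ≠ 0 → v i 0 = 0)) :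
    ∃ v' : Matrix (Fin n) (Fin n) ℤ, IsPermMatrix v' ∧ v = oneOplus v' ∧
      BruhatGE w v' ∧ BruhatGE v' A := by
  obtain ⟨h00, hr0, hc0⟩ := hrow
  set v' : Matrix (Fin n) (Fin n) ℤ := fun i j => v i.succ j.succ with hv'def
  have hveq : v = oneOplus v' := by
    funext i j
    rcases Fin.eq_zero_or_eq_succ i with rfl | ⟨i', rfl⟩
    · rcases Fin.eq_zero_or_eq_succ j with rfl | ⟨j', rfl⟩
      · simpa [oneOplus] using h00
      · have : v 0 j'.succ = 0 := hr0 _ (Fin.succ_ne_zero j')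
        simpa [oneOplus] using this
    · rcases Fin.eq_zero_or_eq_succ j with rfl | ⟨j', rfl⟩
      · have : v i'.succ 0 = 0 := hc0 _ (Fin.succ_ne_zero i')
        simpa [oneOplus] using this
      · rw [oneOplus_succ_succ]
  refine ⟨v', ?_, hveq, ?_, ?_⟩
  · refine ⟨fun i j => hv.1 i.succ j.succ, ?_, ?_⟩
    · intro i
      obtain ⟨j, hj1, hju⟩ := hv.2.1 i.succ
      have hjne : j ≠ 0 := by
        rintro rfl
        rw [hc0 i.succ (Fin.succ_ne_zero i)] at hj1
        exact one_ne_zero hj1.symm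
      obtain ⟨j', rfl⟩ := Fin.eq_succ_of_ne_zero hjne
      refine ⟨j', hj1, fun k hk => ?_⟩
      exact Fin.succ_injective n (hju k.succ hk)
    · intro j
      obtain ⟨i, hi1, hiu⟩ := hv.2.2 j.succ
      have hine : i ≠ 0 := by
        rintro rfl
        rw [hr0 j.succ (Fin.succ_ne_zero j)] at hi1
        exact one_ne_zero hi1.symm
      obtain ⟨i', rfl⟩ := Fin.eq_succ_of_ne_zero hine
      refine ⟨i', hi1, fun k hk => ?_⟩
      exact Fin.succ_injective n (hiu k.succ hk)
  · intro i j hi hj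
    have := hwv (i+1) (j+1) (by omega) (by omega)
    rw [hveq, rk_oneOplus_succ, rk_oneOplus_succ] at this
    linarith
  · intro i j hi hj
    have := hvA (i+1) (j+1) (by omega) (by omega)
    rw [hveq, rk_oneOplus_succ, rk_oneOplus_succ] at this
    linarith
end

section
/- Suppose an n×n ASM A contains an (n−k)×(n−k) ASM A' as a submatrix, with W = {r_1,…,r_k} the rows of A not meeting A' and C = {c_1,…,c_k} the columns of A not meeting A'. Then for each i ∈ [k], A_{r_i,c} = 0 whenever c < c_1 or c > c_k, and A_{r,c_i} = 0 whenever r < r_1 or r > r_k. -/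
namespace ASMAux
open Matrix

/-- prefix row sum -/
def rs {n : ℕ} (A : Matrix (Fin n) (Fin n) ℤ) (i : Fin n) (j : ℕ) : ℤ :=
  ∑ b : Fin n, if (b : ℕ) < j then A i b else 0

lemma rs_zero {n : ℕ} (A : Matrix (Fin n) (Fin n) ℤ) (i : Fin n) : rs A i 0 = 0 := by
  simp [rs]

lemma rs_succ {n : ℕ} (A : Matrix (Fin n) (Fin n) ℤ) (i : Fin n) {j : ℕ} (hj : j < n) :
    rs A i (j + 1) = rs A i j + A i ⟨j, hj⟩ := by
  unfold rs
  have : ∀ b : Fin n, (if (b : ℕ) < j + 1 then A i b else 0) =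
      (if (b : ℕ) < j then A i b else 0) + (if b = ⟨j, hj⟩ then A i b else 0) := by
    intro b
    rcases lt_trichotomy (b : ℕ) j with h | h | h
    · have hb1 : (b : ℕ) < j + 1 := by omega
      have hbne : b ≠ ⟨j, hj⟩ := by
        intro hc; rw [hc] at h; simp at h
      simp [h, hb1, hbne]
    · have hbe : b = ⟨j, hj⟩ := Fin.ext h
      simp [hbe]
    · have hb1 : ¬ ((b : ℕ) < j + 1) := by omega
      have hb2 : ¬ ((b : ℕ) < j) := by omega
      have hbne : b ≠ ⟨j, hj⟩ := by
        intro hc; rw [hc] at h; simp at h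
      simp [hb1, hb2, hbne]
  rw [Finset.sum_congr rfl (fun b _ => this b), Finset.sum_add_distrib]
  congr 1
  simp

lemma rs_stable {n : ℕ} (A : Matrix (Fin n) (Fin n) ℤ) (i : Fin n) {j : ℕ} (hj : n ≤ j) :
    rs A i (j + 1) = rs A i j := by
  unfold rs
  apply Finset.sum_congr rfl
  intro b _
  have hb := b.isLt
  have h1 : (b : ℕ) < j + 1 := by omega
  have h2 : (b : ℕ) < j := by omega
  simp [h1, h2]

lemma rs_top {n : ℕ} {A : Matrix (Fin n) (Fin n) ℤ} (hA : IsASM A) (i : Fin n) :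
    rs A i n = 1 := by
  unfold rs
  rw [Finset.sum_congr rfl (fun b _ => if_pos b.isLt)]
  exact hA.2.1 i

lemma rs_mem {n : ℕ} {A : Matrix (Fin n) (Fin n) ℤ} (hA : IsASM A) (i : Fin n) (j : ℕ) :
    rs A i j = 0 ∨ rs A i j = 1 := by
  obtain ⟨hent, hrow, hcol, hralt, hcalt⟩ := hA
  set Inv : ℕ → Prop := fun j =>
    (∀ b : Fin n, (b : ℕ) < j → A i b = 0) ∨
    (∃ b₀ b₁ : Fin n, (b₀ : ℕ) ≤ (b₁ : ℕ) ∧ (b₁ : ℕ) < j ∧ A i b₀ ≠ 0 ∧ A i b₁ ≠ 0 ∧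
      (∀ b : Fin n, (b : ℕ) < (b₀ : ℕ) → A i b = 0) ∧
      (∀ b : Fin n, (b₁ : ℕ) < (b : ℕ) → (b : ℕ) < j → A i b = 0) ∧
      2 * rs A i j = A i b₀ + A i b₁) with hInvDef
  have hrszero : ∀ j : ℕ, (∀ b : Fin n, (b : ℕ) < j → A i b = 0) → rs A i j = 0 := by
    intro j hz
    apply Finset.sum_eq_zero
    intro b _
    by_cases h : (b : ℕ) < j
    · simp [h, hz b h]
    · simp [h]
  have hInv : ∀ j, Inv j := by
    intro j
    induction j with
    | zero => left; intro b hb; omega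
    | succ j ih =>
      by_cases hjn : j < n
      · have hstep := rs_succ A i hjn
        by_cases he : A i ⟨j, hjn⟩ = 0
        · rcases ih with h0 | ⟨b₀, b₁, hle, hlt, h0ne, h1ne, hpre, hgap, heq⟩
          · left
            intro b hb
            by_cases hbj : (b : ℕ) < j
            · exact h0 b hbj
            · have : b = ⟨j, hjn⟩ := Fin.ext (by simp only [Fin.val_mk]; omega)
              rw [this]; exact he
          · right
            refine ⟨b₀, b₁, hle, by omega, h0ne, h1ne, hpre, ?_, ?_⟩
            · intro b hb1 hb2
              by_cases hbj : (b : ℕ) < j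
              · exact hgap b hb1 hbj
              · have : b = ⟨j, hjn⟩ := Fin.ext (by simp only [Fin.val_mk]; omega)
                rw [this]; exact he
            · rw [hstep, he]; linarith
        · rcases ih with h0 | ⟨b₀, b₁, hle, hlt, h0ne, h1ne, hpre, hgap, heq⟩
          · right
            refine ⟨⟨j, hjn⟩, ⟨j, hjn⟩, le_refl _, by simp only [Fin.val_mk]; omega, he, he, h0, ?_, ?_⟩
            · intro b hb1 hb2; simp only [Fin.val_mk] at hb1; omega
            · have h0' : rs A i j = 0 := hrszero j h0
              rw [hstep, h0']; ring
          · have hlt' : b₁ < (⟨j, hjn⟩ : Fin n) := by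
              rw [Fin.lt_def]; exact hlt
            have halt := hralt i b₁ ⟨j, hjn⟩ hlt' h1ne he ?_
            · right
              refine ⟨b₀, ⟨j, hjn⟩, by simp only [Fin.val_mk]; omega, by simp only [Fin.val_mk]; omega, h0ne, he, hpre, ?_, ?_⟩
              · intro b hb1 hb2; simp only [Fin.val_mk] at hb1; omega
              · rw [hstep]; rw [halt]; linarith
            · intro b hb1 hb2
              rw [Fin.lt_def] at hb1 hb2
              exact hgap b hb1 (by simpa using hb2)
      · have hstep := rs_stable A i (by omega : n ≤ j)
        rcases ih with h0 | ⟨b₀, b₁, hle, hlt, h0ne, h1ne, hpre, hgap, heq⟩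
        · left; intro b hb; exact h0 b (by have := b.isLt; omega)
        · right
          exact ⟨b₀, b₁, hle, by omega, h0ne, h1ne, hpre,
            fun b hb1 hb2 => hgap b hb1 (by have := b.isLt; omega),
            by rw [hstep]; exact heq⟩
  have hrsn : rs A i n = 1 := rs_top ⟨hent, hrow, hcol, hralt, hcalt⟩ i
  obtain ⟨b₀', b₁', _, _, h0ne', h1ne', hpre', hgap', heq'⟩ := (hInv n).resolve_left
    (fun h0 => by rw [hrszero n h0] at hrsn; exact one_ne_zero hrsn.symm)
  have hb0'val : A i b₀' = 1 := by
    rw [hrsn] at heq'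
    rcases hent i b₀' with h | h | h <;> rcases hent i b₁' with h' | h' | h' <;> omega
  rcases hInv j with h0 | ⟨b₀, b₁, hle, hlt, h0ne, h1ne, hpre, hgap, heq⟩
  · left; exact hrszero j h0
  · have hb0eq : b₀ = b₀' := by
      rcases lt_trichotomy (b₀ : ℕ) (b₀' : ℕ) with h | h | h
      · exact absurd (hpre' b₀ h) h0ne
      · exact Fin.ext h
      · exact absurd (hpre b₀' h) h0ne'
    rw [hb0eq, hb0'val] at heq
    rcases hent i b₁ with h | h | h
    · left; omega
    · exact absurd h h1ne
    · right; omega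

lemma transpose_isASM {n : ℕ} {A : Matrix (Fin n) (Fin n) ℤ} (hA : IsASM A) : IsASM Aᵀ := by
  obtain ⟨h1, h2, h3, h4, h5⟩ := hA
  exact ⟨fun i j => h1 j i, h3, h2, fun i j₁ j₂ => h5 i j₁ j₂, fun j i₁ i₂ => h4 j i₁ i₂⟩

lemma rev_isASM {n : ℕ} {A : Matrix (Fin n) (Fin n) ℤ} (hA : IsASM A) :
    IsASM (Matrix.of fun i j : Fin n => A i.rev j.rev) := by
  obtain ⟨h1, h2, h3, h4, h5⟩ := hA
  refine ⟨fun i j => h1 i.rev j.rev, ?_, ?_, ?_, ?_⟩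
  · intro i
    rw [show (∑ j, (Matrix.of fun i j : Fin n => A i.rev j.rev) i j) = ∑ j : Fin n, A i.rev j.rev from rfl]
    rw [Fintype.sum_equiv (Fin.revPerm) (fun j => A i.rev j.rev) (fun j => A i.rev j) (fun x => rfl)]
    exact h2 i.rev
  · intro j
    rw [show (∑ i, (Matrix.of fun i j : Fin n => A i.rev j.rev) i j) = ∑ i : Fin n, A i.rev j.rev from rfl]
    rw [Fintype.sum_equiv (Fin.revPerm) (fun i => A i.rev j.rev) (fun i => A i j.rev) (fun x => rfl)]
    exact h3 j.rev
  · intro i j₁ j₂ h12 hne1 hne2 hgap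
    have := h4 i.rev j₂.rev j₁.rev (Fin.rev_lt_rev.mpr h12) hne2 hne1 ?_
    · simp only [Matrix.of_apply] at *; linarith
    · intro b hb1 hb2
      have := hgap b.rev (by rwa [← Fin.rev_lt_rev, Fin.rev_rev] at hb2)
        (by rwa [← Fin.rev_lt_rev, Fin.rev_rev] at hb1)
      simpa using this
  · intro j i₁ i₂ h12 hne1 hne2 hgap
    have := h5 j.rev i₂.rev i₁.rev (Fin.rev_lt_rev.mpr h12) hne2 hne1 ?_
    · simp only [Matrix.of_apply] at *; linarith
    · intro b hb1 hb2
      have := hgap b.rev (by rwa [← Fin.rev_lt_rev, Fin.rev_rev] at hb2)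
        (by rwa [← Fin.rev_lt_rev, Fin.rev_rev] at hb1)
      simpa using this

lemma fc_fixed {m k : ℕ} {fC : Fin m → Fin (m + k)} (hfC : StrictMono fC) {N : ℕ}
    (hc : ∀ b : Fin (m + k), (b : ℕ) ≤ N → b ∈ Set.range fC) (hN : N < m + k) :
    ∀ j : ℕ, j ≤ N → ∃ hm : j < m, ((fC ⟨j, hm⟩ : Fin (m + k)) : ℕ) = j := by
  intro j
  induction j with
  | zero =>
    intro _
    obtain ⟨p, hp⟩ := hc ⟨0, by omega⟩ (by simp)
    have hp0 : (p : ℕ) = 0 := by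
      by_contra h
      have : (⟨0, by omega⟩ : Fin m) < p := by
        rw [Fin.lt_def]; simp only [Fin.val_mk]; omega
      have := hfC this
      rw [hp] at this
      rw [Fin.lt_def] at this
      simp at this
    refine ⟨by omega, ?_⟩
    have : (⟨0, by omega⟩ : Fin m) = p := Fin.ext (by simp [hp0])
    rw [this, hp]
  | succ j ih =>
    intro hj
    obtain ⟨hm, hfx⟩ := ih (by omega)
    obtain ⟨q, hq⟩ := hc ⟨j + 1, by omega⟩ (by simpa using hj)
    have hqval : (fC q : ℕ) = j + 1 := by rw [hq]
    have hlt : (⟨j, hm⟩ : Fin m) < q := by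
      rw [← hfC.lt_iff_lt, Fin.lt_def, hfx, hqval]; omega
    have hqv : (q : ℕ) = j + 1 := by
      by_contra h
      have hq2 : j + 1 < (q : ℕ) := by rw [Fin.lt_def] at hlt; simp at hlt; omega
      set p' : Fin m := ⟨j + 1, lt_trans hq2 q.isLt⟩ with hp'
      have h1 : (⟨j, hm⟩ : Fin m) < p' := by rw [Fin.lt_def]; simp [hp']
      have h2 : p' < q := by rw [Fin.lt_def]; simp [hp']; omega
      have g1 := hfC h1
      have g2 := hfC h2
      rw [Fin.lt_def] at g1 g2
      rw [hfx] at g1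
      rw [hqval] at g2
      omega
    refine ⟨by omega, ?_⟩
    have : (⟨j + 1, by omega⟩ : Fin m) = q := Fin.ext (by simp [hqv])
    rw [this, hqval]

lemma west {m k : ℕ} (A : Matrix (Fin (m + k)) (Fin (m + k)) ℤ)
    (fR fC : Fin m → Fin (m + k)) (hfR : StrictMono fR) (hfC : StrictMono fC)
    (hA : IsASM A) (hA' : IsASM (Matrix.of fun i j : Fin m => A (fR i) (fC j)))
    (r : Fin (m + k)) (hr : r ∉ Set.range fR) (c : Fin (m + k))
    (hc : ∀ c', c' ∉ Set.range fC → c < c') : A r c = 0 := by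
  have hcmem : ∀ b : Fin (m + k), (b : ℕ) ≤ (c : ℕ) → b ∈ Set.range fC := by
    intro b hb
    by_contra h
    have := hc b h
    rw [Fin.lt_def] at this; omega
  have claim := fc_fixed hfC hcmem c.isLt
  have hkept : ∀ j : ℕ, j ≤ (c : ℕ) + 1 → (∑ i : Fin m, rs A (fR i) j) = (j : ℤ) := by
    intro j
    induction j with
    | zero => intro _; simp [rs_zero]
    | succ j ih =>
      intro hj
      have hj1 : j ≤ (c : ℕ) := by omega
      obtain ⟨hm, hfx⟩ := claim j hj1
      have hjn : j < m + k := lt_of_le_of_lt hj1 c.isLt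
      rw [Finset.sum_congr rfl (fun i _ => rs_succ A (fR i) hjn), Finset.sum_add_distrib,
        ih (by omega)]
      have hcol : (⟨j, hjn⟩ : Fin (m + k)) = fC ⟨j, hm⟩ := Fin.ext (by rw [hfx])
      have hone : (∑ i : Fin m, A (fR i) ⟨j, hjn⟩) = 1 := by
        rw [hcol]; exact hA'.2.2.1 ⟨j, hm⟩
      rw [hone]; push_cast; ring
  have htot : ∀ j : ℕ, j ≤ (c : ℕ) + 1 → (∑ a : Fin (m + k), rs A a j) = (j : ℤ) := by
    intro j
    induction j with
    | zero => intro _; simp [rs_zero]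
    | succ j ih =>
      intro hj
      have hjn : j < m + k := by have := c.isLt; omega
      rw [Finset.sum_congr rfl (fun a _ => rs_succ A a hjn), Finset.sum_add_distrib,
        ih (by omega), hA.2.2.1 ⟨j, hjn⟩]
      push_cast; ring
  have hdel : ∀ j : ℕ, j ≤ (c : ℕ) + 1 → rs A r j = 0 := by
    intro j hj
    set S : Finset (Fin (m + k)) := Finset.univ.image fR with hS
    have hsum : ∑ a ∈ S, rs A a j = ∑ i : Fin m, rs A (fR i) j :=
      Finset.sum_image (fun x _ y _ h => hfR.injective h)
    have hcompl : ∑ a ∈ Sᶜ, rs A a j = 0 := by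
      have hsp := Finset.sum_add_sum_compl S (fun a => rs A a j)
      rw [hsum, htot j hj, hkept j hj] at hsp
      linarith
    have hrS : r ∈ Sᶜ := by
      rw [Finset.mem_compl, hS]
      intro hmem
      obtain ⟨i, _, hi⟩ := Finset.mem_image.mp hmem
      exact hr ⟨i, hi⟩
    have hnn : ∀ a ∈ Sᶜ, 0 ≤ rs A a j := by
      intro a _; rcases rs_mem hA a j with h | h <;> omega
    exact (Finset.sum_eq_zero_iff_of_nonneg hnn).mp hcompl r hrS
  have h1 := hdel (c : ℕ) (by omega)
  have h2 := hdel ((c : ℕ) + 1) (le_refl _)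
  have hst := rs_succ A r c.isLt
  rw [h1, h2] at hst
  have hceq : (⟨(c : ℕ), c.isLt⟩ : Fin (m + k)) = c := Fin.ext rfl
  rw [hceq] at hst
  linarith

lemma east {m k : ℕ} (A : Matrix (Fin (m + k)) (Fin (m + k)) ℤ)
    (fR fC : Fin m → Fin (m + k)) (hfR : StrictMono fR) (hfC : StrictMono fC)
    (hA : IsASM A) (hA' : IsASM (Matrix.of fun i j : Fin m => A (fR i) (fC j)))
    (r : Fin (m + k)) (hr : r ∉ Set.range fR) (c : Fin (m + k))
    (hc : ∀ c', c' ∉ Set.range fC → c' < c) : A r c = 0 := by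
  set B : Matrix (Fin (m + k)) (Fin (m + k)) ℤ := Matrix.of fun a b => A a.rev b.rev with hB
  set fR' : Fin m → Fin (m + k) := fun i => (fR i.rev).rev with hfR'
  set fC' : Fin m → Fin (m + k) := fun i => (fC i.rev).rev with hfC'
  have hfRm : StrictMono fR' := by
    intro a b hab
    simp only [hfR']
    rw [Fin.rev_lt_rev]
    exact hfR (Fin.rev_lt_rev.mpr hab)
  have hfCm : StrictMono fC' := by
    intro a b hab
    simp only [hfC']
    rw [Fin.rev_lt_rev]
    exact hfC (Fin.rev_lt_rev.mpr hab)
  have hBASM : IsASM B := rev_isASM hA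
  have hsub : (Matrix.of fun i j : Fin m => B (fR' i) (fC' j)) =
      (Matrix.of fun i j : Fin m =>
        (Matrix.of fun i j : Fin m => A (fR i) (fC j)) i.rev j.rev) := by
    ext i j
    simp [hB, hfR', hfC', Fin.rev_rev]
  have hB' : IsASM (Matrix.of fun i j : Fin m => B (fR' i) (fC' j)) := by
    rw [hsub]; exact rev_isASM hA'
  have hrB : r.rev ∉ Set.range fR' := by
    rintro ⟨i, hi⟩
    apply hr
    refine ⟨i.rev, ?_⟩
    have : (fR i.rev).rev = r.rev := hi
    have := congrArg Fin.rev this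
    simpa [Fin.rev_rev] using this
  have hcB : ∀ c', c' ∉ Set.range fC' → c.rev < c' := by
    intro d hd
    have hdrev : d.rev ∉ Set.range fC := by
      rintro ⟨p, hp⟩
      apply hd
      refine ⟨p.rev, ?_⟩
      simp [hfC', Fin.rev_rev, hp]
    have h1 := hc d.rev hdrev
    have h2 : c.rev < d.rev.rev := Fin.rev_lt_rev.mpr h1
    simpa [Fin.rev_rev] using h2
  have := west B fR' fC' hfRm hfCm hBASM hB' r.rev hrB c.rev hcB
  simpa [hB, Fin.rev_rev] using this

end ASMAux

open Matrix

/-- Suppose an `(m+k) × (m+k)` ASM `A` contains an `m × m` ASM as a submatrix,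
where `fR, fC` are the strictly increasing maps selecting the kept rows and
columns.  Then every deleted row vanishes in the columns strictly west of the
first deleted column and strictly east of the last deleted column, and
symmetrically for the deleted columns. -/
theorem asm_submatrix_zero_entries {m k : ℕ}
    (A : Matrix (Fin (m + k)) (Fin (m + k)) ℤ)
    (fR fC : Fin m → Fin (m + k)) (hfR : StrictMono fR) (hfC : StrictMono fC)
    (hA : IsASM A)
    (hA' : IsASM (Matrix.of fun i j : Fin m => A (fR i) (fC j))) :
    (∀ r : Fin (m + k), r ∉ Set.range fR → ∀ c : Fin (m + k),
      ((∀ c', c' ∉ Set.range fC → c < c') ∨ (∀ c', c' ∉ Set.range fC → c' < c)) →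
        A r c = 0) ∧
    (∀ c : Fin (m + k), c ∉ Set.range fC → ∀ r : Fin (m + k),
      ((∀ r', r' ∉ Set.range fR → r < r') ∨ (∀ r', r' ∉ Set.range fR → r' < r)) →
        A r c = 0) := by
  have hAT : IsASM Aᵀ := ASMAux.transpose_isASM hA
  have hA'T : IsASM (Matrix.of fun i j : Fin m => Aᵀ (fC i) (fR j)) := by
    have : (Matrix.of fun i j : Fin m => Aᵀ (fC i) (fR j)) =
        (Matrix.of fun i j : Fin m => A (fR i) (fC j))ᵀ := by
      ext i j; simp [Matrix.transpose_apply]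
    rw [this]
    exact ASMAux.transpose_isASM hA'
  constructor
  · intro r hr c hcase
    rcases hcase with h | h
    · exact ASMAux.west A fR fC hfR hfC hA hA' r hr c h
    · exact ASMAux.east A fR fC hfR hfC hA hA' r hr c h
  · intro c hcvert r hcase
    rcases hcase with h | h
    · exact ASMAux.west Aᵀ fC fR hfC hfR hAT hA'T c hcvert r h
    · exact ASMAux.east Aᵀ fC fR hfC hfR hAT hA'T c hcvert r h
end

section
/- Suppose an n×n ASM A contains an (n−k)×(n−k) ASM A' as a submatrix, obtained by deleting rows W and columns C with |W| = |C| = k. Then ∑_{r∈W, c∈C} A_{r,c} = k. In particular there are at least k pairs (r,c) ∈ W × C with A_{r,c} = 1. -/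
/-- Suppose an `(m+k) × (m+k)` ASM `A` contains an `m × m` ASM as the submatrix
on the kept rows `fR` and kept columns `fC`, with `W` and `C` the sets of
deleted rows and columns (each of size `k`).  Then `∑_{r ∈ W, c ∈ C} A_{r,c} = k`;
in particular at least `k` pairs `(r,c) ∈ W × C` have `A_{r,c} = 1`. -/
theorem asm_submatrix_corner_sum {m k : ℕ}
    (A : Matrix (Fin (m + k)) (Fin (m + k)) ℤ)
    (fR fC : Fin m → Fin (m + k)) (hfR : StrictMono fR) (hfC : StrictMono fC)
    (hA : IsASM A)
    (hA' : IsASM (Matrix.of fun i j : Fin m => A (fR i) (fC j))) :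
    (∑ r ∈ Finset.univ \ Finset.image fR Finset.univ,
      ∑ c ∈ Finset.univ \ Finset.image fC Finset.univ, A r c) = (k : ℤ) ∧
    k ≤ (((Finset.univ \ Finset.image fR Finset.univ) ×ˢ
          (Finset.univ \ Finset.image fC Finset.univ)).filter
            fun p => A p.1 p.2 = 1).card := by
  obtain ⟨hv, hrow, hcol, -, -⟩ := hA
  obtain ⟨-, -, hcol', -, -⟩ := hA'
  have hinjR := hfR.injective
  have hinjC := hfC.injective
  set S := Finset.univ \ Finset.image fR Finset.univ with hS
  set T := Finset.univ \ Finset.image fC Finset.univ with hT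
  have hcardS : S.card = k := by
    rw [hS, Finset.card_sdiff_of_subset (Finset.subset_univ _),
      Finset.card_image_of_injective _ hinjR]
    simp
  have hinner : ∑ c ∈ Finset.image fC Finset.univ,
      ∑ r ∈ Finset.image fR Finset.univ, A r c = (m : ℤ) := by
    rw [Finset.sum_image (fun a _ b _ h => hinjC h)]
    have h1 : ∀ j : Fin m, ∑ r ∈ Finset.image fR Finset.univ, A r (fC j) = 1 := by
      intro j
      rw [Finset.sum_image (fun a _ b _ h => hinjR h)]
      exact hcol' j
    simp [h1]
  have hmid : ∑ r ∈ S, ∑ c ∈ Finset.image fC Finset.univ, A r c = 0 := by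
    rw [Finset.sum_comm (f := fun r c => A r c)]
    have h2 : ∀ c, ∑ r ∈ S, A r c =
        (∑ r, A r c) - ∑ r ∈ Finset.image fR Finset.univ, A r c := by
      intro c
      rw [hS, Finset.sum_sdiff_eq_sub (Finset.subset_univ _)]
    rw [Finset.sum_congr rfl fun c _ => h2 c, Finset.sum_sub_distrib, hinner]
    have h3 : ∑ c ∈ Finset.image fC Finset.univ, ∑ r, A r c = (m : ℤ) := by
      rw [Finset.sum_congr rfl fun c _ => hcol c,
        Finset.sum_const, Finset.card_image_of_injective _ hinjC]
      simp
    rw [h3]; ring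
  have hsum : ∑ r ∈ S, ∑ c ∈ T, A r c = (k : ℤ) := by
    have h4 : ∀ r, ∑ c ∈ T, A r c =
        1 - ∑ c ∈ Finset.image fC Finset.univ, A r c := by
      intro r
      rw [hT, Finset.sum_sdiff_eq_sub (Finset.subset_univ _), hrow r]
    rw [Finset.sum_congr rfl fun r _ => h4 r, Finset.sum_sub_distrib, hmid,
      Finset.sum_const, hcardS]
    simp
  refine ⟨hsum, ?_⟩
  have hsum' : ∑ p ∈ S ×ˢ T, A p.1 p.2 = (k : ℤ) := by
    rw [Finset.sum_product]; exact hsum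
  have hFle : (k : ℤ) ≤
      (((S ×ˢ T).filter fun p => A p.1 p.2 = 1).card : ℤ) := by
    rw [← hsum', ← Finset.sum_filter_add_sum_filter_not (S ×ˢ T)
      (fun p => A p.1 p.2 = 1)]
    have hA1 : ∑ p ∈ (S ×ˢ T).filter (fun p => A p.1 p.2 = 1), A p.1 p.2 =
        (((S ×ˢ T).filter fun p => A p.1 p.2 = 1).card : ℤ) := by
      rw [Finset.sum_congr rfl fun p hp => (Finset.mem_filter.mp hp).2]
      simp
    have hA2 : ∑ p ∈ (S ×ˢ T).filter (fun p => ¬ A p.1 p.2 = 1), A p.1 p.2 ≤ 0 := by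
      apply Finset.sum_nonpos
      intro p hp
      have hne := (Finset.mem_filter.mp hp).2
      rcases hv p.1 p.2 with h | h | h
      · omega
      · omega
      · exact absurd h hne
    rw [hA1]
    linarith
  exact_mod_cast hFle
end

section
/- If A' ∈ ASM(n−k) sits as the top-left (n−k)×(n−k) block of A ∈ ASM(n), then A = A' ⊕ B for some B ∈ ASM(k); that is, the off-diagonal blocks of A are zero and the bottom-right k×k block is itself an ASM. -/
/-- The block-diagonal direct sum of an `m × m` matrix and a `k × k` matrix. -/
def directSum {m k : ℕ} (A : Matrix (Fin m) (Fin m) ℤ) (B : Matrix (Fin k) (Fin k) ℤ) :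
    Matrix (Fin (m + k)) (Fin (m + k)) ℤ :=
  Matrix.reindex finSumFinEquiv finSumFinEquiv (Matrix.fromBlocks A 0 0 B)

namespace ASMaux
open Finset

def S (g : ℕ → ℤ) (j : ℕ) : ℤ := ∑ i ∈ Finset.range j, g i

lemma S_def (g : ℕ → ℤ) (j : ℕ) : S g j = ∑ i ∈ Finset.range j, g i := rfl

lemma S_succ (g : ℕ → ℤ) (j : ℕ) : S g (j+1) = S g j + g j := Finset.sum_range_succ g j

lemma S_split (g : ℕ → ℤ) {a b : ℕ} (h : a ≤ b) :
    S g b = S g a + ∑ c ∈ Finset.Ico a b, g c := by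
  unfold S
  rw [Finset.range_eq_Ico, Finset.range_eq_Ico]
  exact (Finset.sum_Ico_consecutive g (Nat.zero_le a) h).symm

lemma S_le_one {g : ℕ → ℤ}
    (hval : ∀ j, g j = -1 ∨ g j = 0 ∨ g j = 1)
    (halt : ∀ a b, a < b → g a ≠ 0 → g b ≠ 0 → (∀ c, a < c → c < b → g c = 0) →
      g b = -g a) : ∀ j, S g j ≤ 1 := by
  intro j
  induction j using Nat.strong_induction_on with
  | _ j ih =>
    match j with
    | 0 => simp [S]
    | t+1 =>
      rw [S_succ]
      have ht1 : S g t ≤ 1 := ih t (by omega)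
      rcases hval t with h|h|h
      · omega
      · omega
      · suffices hst : S g t ≤ 0 by omega
        by_contra hc
        have hst1 : S g t = 1 := by omega
        have hne : ((Finset.range t).filter (fun c => g c ≠ 0)).Nonempty := by
          by_contra hno
          rw [Finset.not_nonempty_iff_eq_empty, Finset.filter_eq_empty_iff] at hno
          have : S g t = 0 := Finset.sum_eq_zero fun b hb => by
            have := hno hb; simpa using this
          omega
        set b := ((Finset.range t).filter (fun c => g c ≠ 0)).max' hne with hbdef
        have hbmem := Finset.max'_mem _ hne
        rw [Finset.mem_filter, Finset.mem_range] at hbmem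
        obtain ⟨hbt, hbne⟩ := hbmem
        have hbmax : ∀ c, b < c → c < t → g c = 0 := by
          intro c hc1 hc2
          by_contra hcne
          have : c ≤ b := Finset.le_max' _ c (by
            rw [Finset.mem_filter, Finset.mem_range]; exact ⟨hc2, hcne⟩)
          omega
        have hgb : g b = -1 := by
          have := halt b t hbt hbne (by omega) hbmax
          omega
        have hmid : ∑ c ∈ Finset.Ico (b+1) t, g c = 0 :=
          Finset.sum_eq_zero fun c hc => by
            rw [Finset.mem_Ico] at hc; exact hbmax c (by omega) hc.2
        have hsplit := S_split g (show b + 1 ≤ t by omega)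
        have hsb := S_succ g b
        have hSb : S g b ≤ 1 := ih b (by omega)
        omega

lemma S_bounds {g : ℕ → ℤ} {N : ℕ}
    (hval : ∀ j, g j = -1 ∨ g j = 0 ∨ g j = 1)
    (halt : ∀ a b, a < b → g a ≠ 0 → g b ≠ 0 → (∀ c, a < c → c < b → g c = 0) →
      g b = -g a)
    (hsupp : ∀ j, N ≤ j → g j = 0) (htot : S g N = 1) :
    ∀ j, 0 ≤ S g j ∧ S g j ≤ 1 := by
  have hle := S_le_one hval halt
  set g' : ℕ → ℤ := fun c => if c < N then g (N - 1 - c) else 0 with hg'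
  have hval' : ∀ j, g' j = -1 ∨ g' j = 0 ∨ g' j = 1 := by
    intro j; by_cases h : j < N <;> simp [hg', h, hval]
  have hlt : ∀ {a : ℕ}, g' a ≠ 0 → a < N := by
    intro a ha; by_contra h; simp [hg', h] at ha
  have halt' : ∀ a b, a < b → g' a ≠ 0 → g' b ≠ 0 → (∀ c, a < c → c < b → g' c = 0) →
      g' b = -g' a := by
    intro a b hab ha hb hmidz
    have haN := hlt ha
    have hbN := hlt hb
    have hga : g' a = g (N - 1 - a) := if_pos haN
    have hgb : g' b = g (N - 1 - b) := if_pos hbN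
    rw [hga] at ha ⊢; rw [hgb] at hb ⊢
    have := halt (N - 1 - b) (N - 1 - a) (by omega) hb ha (by
      intro c hc1 hc2
      have hcN : c < N := by omega
      have : g' (N - 1 - c) = 0 := hmidz _ (by omega) (by omega)
      rw [hg'] at this
      simp only [show N - 1 - c < N by omega, if_true] at this
      rwa [show N - 1 - (N - 1 - c) = c by omega] at this)
    omega
  have hle' := S_le_one hval' halt'
  have key : ∀ j, j ≤ N → S g' j = S g N - S g (N - j) := by
    intro j
    induction j with
    | zero => simp [S]
    | succ t ihj =>
      intro h
      rw [S_succ, ihj (by omega)]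
      have h1 : g' t = g (N - 1 - t) := if_pos (by omega)
      have h2 : S g (N - t) = S g (N - (t+1)) + g (N - (t+1)) := by
        rw [show N - t = (N - (t+1)) + 1 by omega, S_succ]
      rw [h1, show N - 1 - t = N - (t+1) by omega]
      omega
  intro j
  rcases le_or_gt j N with hj | hj
  · have h1 := key (N - j) (by omega)
    rw [show N - (N - j) = j by omega] at h1
    have h2 := hle' (N - j)
    have h3 := hle j
    omega
  · have : S g j = S g N + ∑ c ∈ Finset.Ico N j, g c := S_split g (by omega)
    have hz : ∑ c ∈ Finset.Ico N j, g c = 0 :=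
      Finset.sum_eq_zero fun c hc => hsupp c (Finset.mem_Ico.mp hc).1
    omega


def rowg {n : ℕ} (A : Matrix (Fin n) (Fin n) ℤ) (i : Fin n) : ℕ → ℤ :=
  fun b => if h : b < n then A i ⟨b, h⟩ else 0

def colg {n : ℕ} (A : Matrix (Fin n) (Fin n) ℤ) (j : Fin n) : ℕ → ℤ :=
  fun a => if h : a < n then A ⟨a, h⟩ j else 0

lemma rowg_coe {n : ℕ} (A : Matrix (Fin n) (Fin n) ℤ) (i b : Fin n) :
    rowg A i (b : ℕ) = A i b := by
  simp [rowg, b.isLt]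

lemma colg_coe {n : ℕ} (A : Matrix (Fin n) (Fin n) ℤ) (j a : Fin n) :
    colg A j (a : ℕ) = A a j := by
  simp [colg, a.isLt]

lemma S_rowg_total {n : ℕ} (A : Matrix (Fin n) (Fin n) ℤ) (i : Fin n) :
    S (rowg A i) n = ∑ j, A i j := by
  rw [S_def, ← Fin.sum_univ_eq_sum_range (rowg A i) n]
  exact Finset.sum_congr rfl fun b _ => rowg_coe A i b

lemma S_colg_total {n : ℕ} (A : Matrix (Fin n) (Fin n) ℤ) (j : Fin n) :
    S (colg A j) n = ∑ i, A i j := by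
  rw [S_def, ← Fin.sum_univ_eq_sum_range (colg A j) n]
  exact Finset.sum_congr rfl fun a _ => colg_coe A j a

lemma rowg_bounds {n : ℕ} {A : Matrix (Fin n) (Fin n) ℤ} (hA : IsASM A) (i : Fin n) :
    ∀ j, 0 ≤ S (rowg A i) j ∧ S (rowg A i) j ≤ 1 := by
  obtain ⟨hval, hrow, -, hralt, -⟩ := hA
  apply S_bounds (N := n)
  · intro b
    by_cases h : b < n
    · simpa [rowg, h] using hval i ⟨b, h⟩
    · simp [rowg, h]
  · intro a b hab ha hb hmid
    have hbn : b < n := by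
      by_contra h; simp [rowg, h] at hb
    have han : a < n := by omega
    simp only [rowg, dif_pos han] at ha ⊢
    simp only [rowg, dif_pos hbn] at hb ⊢
    refine hralt i ⟨a, han⟩ ⟨b, hbn⟩ (by simpa [Fin.lt_def]) ha hb ?_
    intro j hj1 hj2
    have := hmid (j : ℕ) (by simpa [Fin.lt_def] using hj1) (by simpa [Fin.lt_def] using hj2)
    rwa [rowg_coe] at this
  · intro j hj; simp [rowg, show ¬ j < n by omega]
  · rw [S_rowg_total]; exact hrow i

lemma colg_bounds {n : ℕ} {A : Matrix (Fin n) (Fin n) ℤ} (hA : IsASM A) (j : Fin n) :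
    ∀ i, 0 ≤ S (colg A j) i ∧ S (colg A j) i ≤ 1 := by
  obtain ⟨hval, -, hcol, -, hcalt⟩ := hA
  apply S_bounds (N := n)
  · intro b
    by_cases h : b < n
    · simpa [colg, h] using hval ⟨b, h⟩ j
    · simp [colg, h]
  · intro a b hab ha hb hmid
    have hbn : b < n := by
      by_contra h; simp [colg, h] at hb
    have han : a < n := by omega
    simp only [colg, dif_pos han] at ha ⊢
    simp only [colg, dif_pos hbn] at hb ⊢
    refine hcalt j ⟨a, han⟩ ⟨b, hbn⟩ (by simpa [Fin.lt_def]) ha hb ?_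
    intro i hi1 hi2
    have := hmid (i : ℕ) (by simpa [Fin.lt_def] using hi1) (by simpa [Fin.lt_def] using hi2)
    rwa [colg_coe] at this
  · intro i hi; simp [colg, show ¬ i < n by omega]
  · rw [S_colg_total]; exact hcol j

end ASMaux

open ASMaux in
/-- If an ASM `A'` sits as the top-left block of an ASM `A`, then
`A = A' ⊕ B` for some ASM `B`. -/
theorem asm_topLeft_block_is_directSum {m k : ℕ}
    (A : Matrix (Fin (m + k)) (Fin (m + k)) ℤ) (A' : Matrix (Fin m) (Fin m) ℤ)
    (hA : IsASM A) (hA' : IsASM A')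
    (hblock : ∀ i j : Fin m, A (Fin.castAdd k i) (Fin.castAdd k j) = A' i j) :
    ∃ B : Matrix (Fin k) (Fin k) ℤ, IsASM B ∧ A = directSum A' B := by
  have hval := hA.1
  have hrow := hA.2.1
  have hcol := hA.2.2.1
  have hralt := hA.2.2.2.1
  have hcalt := hA.2.2.2.2
  -- partial sums of first m entries of a top row of A equal 1
  have hrowm : ∀ i : Fin (m + k), (i : ℕ) < m → S (rowg A i) m = 1 := by
    intro i him
    have : S (rowg A i) m = ∑ b : Fin m, A' ⟨i, him⟩ b := by
      rw [S_def, ← Fin.sum_univ_eq_sum_range (rowg A i) m]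
      refine Finset.sum_congr rfl fun b _ => ?_
      have hb : (b : ℕ) < m + k := by omega
      have h1 : rowg A i (b : ℕ) = A i ⟨b, hb⟩ := dif_pos hb
      rw [h1]
      have h2 : (⟨(b : ℕ), hb⟩ : Fin (m + k)) = Fin.castAdd k b := rfl
      have h3 : i = Fin.castAdd k ⟨i, him⟩ := by
        apply Fin.ext; rfl
      rw [h2, ← hblock ⟨i, him⟩ b]
      exact congrFun (congrArg A h3) _
    rw [this]; exact hA'.2.1 ⟨i, him⟩
  have hcolm : ∀ j : Fin (m + k), (j : ℕ) < m → S (colg A j) m = 1 := by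
    intro j hjm
    have : S (colg A j) m = ∑ a : Fin m, A' a ⟨j, hjm⟩ := by
      rw [S_def, ← Fin.sum_univ_eq_sum_range (colg A j) m]
      refine Finset.sum_congr rfl fun a _ => ?_
      have ha : (a : ℕ) < m + k := by omega
      have h1 : colg A j (a : ℕ) = A ⟨a, ha⟩ j := dif_pos ha
      rw [h1]
      have h2 : (⟨(a : ℕ), ha⟩ : Fin (m + k)) = Fin.castAdd k a := rfl
      have h3 : j = Fin.castAdd k ⟨j, hjm⟩ := by apply Fin.ext; rfl
      rw [h2, ← hblock a ⟨j, hjm⟩]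
      exact congrArg (A (Fin.castAdd k a)) h3
    rw [this]; exact hA'.2.2.1 ⟨j, hjm⟩
  -- top-right block is zero
  have topRight : ∀ i j : Fin (m + k), (i : ℕ) < m → m ≤ (j : ℕ) → A i j = 0 := by
    have main : ∀ N, ∀ i j : Fin (m + k), (i : ℕ) + (j : ℕ) < N →
        (i : ℕ) < m → m ≤ (j : ℕ) → A i j = 0 := by
      intro N
      induction N with
      | zero => intro i j h; omega
      | succ N ih =>
        intro i j hN him hjm
        rcases hval i j with h | h | h
        · exfalso
          have hpre : S (colg A j) i = 0 := by
            rw [S_def]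
            refine Finset.sum_eq_zero fun a ha => ?_
            rw [Finset.mem_range] at ha
            have han : a < m + k := by omega
            have : colg A j a = A ⟨a, han⟩ j := dif_pos han
            rw [this]
            exact ih ⟨a, han⟩ j (by simp only [Fin.val_mk]; omega) (by simp only [Fin.val_mk]; omega) hjm
          have hstep := S_succ (colg A j) i
          have hcj : colg A j (i : ℕ) = A i j := colg_coe A j i
          have := (colg_bounds hA j ((i : ℕ) + 1)).1
          omega
        · exact h
        · exfalso
          have h2 : S (rowg A i) (j : ℕ) = 1 := by
            rw [S_split (rowg A i) (show m ≤ (j : ℕ) from hjm), hrowm i him]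
            have : ∑ c ∈ Finset.Ico m (j : ℕ), rowg A i c = 0 := by
              refine Finset.sum_eq_zero fun c hc => ?_
              rw [Finset.mem_Ico] at hc
              have hcn : c < m + k := by omega
              have : rowg A i c = A i ⟨c, hcn⟩ := dif_pos hcn
              rw [this]
              exact ih i ⟨c, hcn⟩ (by simp only [Fin.val_mk]; omega) him (by simp only [Fin.val_mk]; exact hc.1)
            omega
          have hstep := S_succ (rowg A i) (j : ℕ)
          have hrj : rowg A i (j : ℕ) = A i j := rowg_coe A i j
          have := (rowg_bounds hA i ((j : ℕ) + 1)).2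
          omega
    exact fun i j => main ((i : ℕ) + (j : ℕ) + 1) i j (by omega)
  -- bottom-left block is zero
  have botLeft : ∀ i j : Fin (m + k), m ≤ (i : ℕ) → (j : ℕ) < m → A i j = 0 := by
    have main : ∀ N, ∀ i j : Fin (m + k), (i : ℕ) + (j : ℕ) < N →
        m ≤ (i : ℕ) → (j : ℕ) < m → A i j = 0 := by
      intro N
      induction N with
      | zero => intro i j h; omega
      | succ N ih =>
        intro i j hN him hjm
        rcases hval i j with h | h | h
        · exfalso
          have hpre : S (rowg A i) j = 0 := by
            rw [S_def]
            refine Finset.sum_eq_zero fun b hb => ?_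
            rw [Finset.mem_range] at hb
            have hbn : b < m + k := by omega
            have : rowg A i b = A i ⟨b, hbn⟩ := dif_pos hbn
            rw [this]
            exact ih i ⟨b, hbn⟩ (by simp only [Fin.val_mk]; omega) him (by simp only [Fin.val_mk]; omega)
          have hstep := S_succ (rowg A i) j
          have hrj : rowg A i (j : ℕ) = A i j := rowg_coe A i j
          have := (rowg_bounds hA i ((j : ℕ) + 1)).1
          omega
        · exact h
        · exfalso
          have h2 : S (colg A j) (i : ℕ) = 1 := by
            rw [S_split (colg A j) (show m ≤ (i : ℕ) from him), hcolm j hjm]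
            have : ∑ c ∈ Finset.Ico m (i : ℕ), colg A j c = 0 := by
              refine Finset.sum_eq_zero fun c hc => ?_
              rw [Finset.mem_Ico] at hc
              have hcn : c < m + k := by omega
              have : colg A j c = A ⟨c, hcn⟩ j := dif_pos hcn
              rw [this]
              exact ih ⟨c, hcn⟩ j (by simp only [Fin.val_mk]; omega) (by simp only [Fin.val_mk]; exact hc.1) hjm
            omega
          have hstep := S_succ (colg A j) (i : ℕ)
          have hcj : colg A j (i : ℕ) = A i j := colg_coe A j i
          have := (colg_bounds hA j ((i : ℕ) + 1)).2
          omega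
    exact fun i j => main ((i : ℕ) + (j : ℕ) + 1) i j (by omega)
  -- define B
  set B : Matrix (Fin k) (Fin k) ℤ :=
    fun i j => A (Fin.natAdd m i) (Fin.natAdd m j) with hB
  refine ⟨B, ?_, ?_⟩
  · refine ⟨fun i j => hval _ _, ?_, ?_, ?_, ?_⟩
    · intro i
      have h1 := hrow (Fin.natAdd m i)
      rw [Fin.sum_univ_add] at h1
      have h2 : ∀ b : Fin m, A (Fin.natAdd m i) (Fin.castAdd k b) = 0 := fun b =>
        botLeft _ _ (by simp) (by simp)
      simp only [h2, Finset.sum_const_zero, zero_add] at h1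
      exact h1
    · intro j
      have h1 := hcol (Fin.natAdd m j)
      rw [Fin.sum_univ_add] at h1
      have h2 : ∀ a : Fin m, A (Fin.castAdd k a) (Fin.natAdd m j) = 0 := fun a =>
        topRight _ _ (by simp) (by simp)
      simp only [h2, Finset.sum_const_zero, zero_add] at h1
      exact h1
    · intro i j₁ j₂ h12 h1 h2 hmid
      have h12' : (j₁ : ℕ) < (j₂ : ℕ) := h12
      refine hralt (Fin.natAdd m i) (Fin.natAdd m j₁) (Fin.natAdd m j₂)
        (by simp only [Fin.lt_def, Fin.coe_natAdd]; omega) h1 h2 ?_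
      intro j hj1 hj2
      rw [Fin.lt_def] at hj1 hj2
      simp only [Fin.coe_natAdd] at hj1 hj2
      have hjm : m ≤ (j : ℕ) := by omega
      have hj' : (j : ℕ) - m < k := by omega
      have hje : j = Fin.natAdd m ⟨(j : ℕ) - m, hj'⟩ := by
        apply Fin.ext; simp; omega
      rw [hje]
      exact hmid ⟨(j : ℕ) - m, hj'⟩ (by simp only [Fin.lt_def, Fin.val_mk]; omega)
        (by simp only [Fin.lt_def, Fin.val_mk]; omega)
    · intro j i₁ i₂ h12 h1 h2 hmid
      have h12' : (i₁ : ℕ) < (i₂ : ℕ) := h12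
      refine hcalt (Fin.natAdd m j) (Fin.natAdd m i₁) (Fin.natAdd m i₂)
        (by simp only [Fin.lt_def, Fin.coe_natAdd]; omega) h1 h2 ?_
      intro i hi1 hi2
      rw [Fin.lt_def] at hi1 hi2
      simp only [Fin.coe_natAdd] at hi1 hi2
      have him : m ≤ (i : ℕ) := by omega
      have hi' : (i : ℕ) - m < k := by omega
      have hie : i = Fin.natAdd m ⟨(i : ℕ) - m, hi'⟩ := by
        apply Fin.ext; simp; omega
      rw [hie]
      exact hmid ⟨(i : ℕ) - m, hi'⟩ (by simp only [Fin.lt_def, Fin.val_mk]; omega)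
        (by simp only [Fin.lt_def, Fin.val_mk]; omega)
  · have hrep : ∀ i : Fin (m + k),
        (∃ a : Fin m, i = Fin.castAdd k a) ∨ (∃ a : Fin k, i = Fin.natAdd m a) := by
      intro i
      rcases lt_or_ge (i : ℕ) m with h | h
      · exact Or.inl ⟨⟨i, h⟩, Fin.ext rfl⟩
      · refine Or.inr ⟨⟨(i : ℕ) - m, by omega⟩, Fin.ext ?_⟩
        simp only [Fin.coe_natAdd, Fin.val_mk]; omega
    ext i j
    have ds : ∀ (p q : Fin m ⊕ Fin k),
        directSum A' B (finSumFinEquiv p) (finSumFinEquiv q) =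
          Matrix.fromBlocks A' 0 0 B p q := by
      intro p q
      simp [directSum]
    rcases hrep i with ⟨a, rfl⟩ | ⟨a, rfl⟩ <;> rcases hrep j with ⟨b, rfl⟩ | ⟨b, rfl⟩
    · rw [← finSumFinEquiv_apply_left, ← finSumFinEquiv_apply_left, ds]
      exact hblock a b
    · rw [← finSumFinEquiv_apply_left, ← finSumFinEquiv_apply_right, ds]
      exact topRight _ _ (by simp) (by simp)
    · rw [← finSumFinEquiv_apply_right, ← finSumFinEquiv_apply_left, ds]
      exact botLeft _ _ (by simp) (by simp)
    · rw [← finSumFinEquiv_apply_right, ← finSumFinEquiv_apply_right, ds]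
      rfl
end
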